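/- Let H be a complex Hilbert space and let 𝒫 be a nonempty collection of partitions of H. Call two cells u, v ∈ ⋃𝒫 equivalent if there is a finite chain u = w₀, w₁, …, w_k = v of elements of ⋃𝒫 in which consecutive members are not orthogonal. Then the set Q₀ = { ⨆C : C an equivalence class of ⋃𝒫 } is a partition of H, and Q₀ is the least upper bound of 𝒫 in the refinement order. -/

import Mathlib

variable {H : Type*} [NormedAddCommGroup H] [InnerProductSpace ℂ H]

/-- Two subspaces of a complex inner product space are orthogonal when every vector of
one is orthogonal to every vector of the other. -/
def Orth (p q : Submodule ℂ H) : Prop :=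
  ∀ x ∈ p, ∀ y ∈ q, @inner ℂ H _ x y = 0

/-- A partition of `H` is a set of nonzero closed subspaces of `H` that are pairwise
orthogonal and whose supremum in the complete lattice of closed subspaces of `H`
(i.e. the topological closure of the submodule supremum) is all of `H`. -/
def IsPartition (P : Set (Submodule ℂ H)) : Prop :=
  (∀ p ∈ P, p ≠ ⊥) ∧
  (∀ p ∈ P, IsClosed (p : Set H)) ∧
  (∀ p ∈ P, ∀ q ∈ P, p ≠ q → Orth p q) ∧
  (sSup P).topologicalClosure = ⊤

/-- `P₁` refines `P₂` when every cell of `P₁` is contained in some cell of `P₂`. -/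
def Refines (P₁ P₂ : Set (Submodule ℂ H)) : Prop :=
  ∀ p ∈ P₁, ∃ q ∈ P₂, p ≤ q

/-- A multicell of a partition `P` is the supremum (in the lattice of closed subspaces)
of a possibly empty subset of `P`. -/
def IsMulticell (P : Set (Submodule ℂ H)) (m : Submodule ℂ H) : Prop :=
  ∃ C ⊆ P, m = (sSup C).topologicalClosure

/-- Two subspaces `u`, `v` in a family `U` are chain-equivalent when there is a finite chain
`u = w₀, w₁, …, w_k = v` of members of `U` in which consecutive members are not orthogonal. -/
def ChainEquiv (U : Set (Submodule ℂ H)) (u v : Submodule ℂ H) : Prop :=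
  ∃ k : ℕ, ∃ w : Fin (k + 1) → Submodule ℂ H,
    w 0 = u ∧ w (Fin.last k) = v ∧ (∀ i, w i ∈ U) ∧
      ∀ i : Fin k, ¬ Orth (w i.castSucc) (w i.succ)

/-- The candidate least upper bound: the set of suprema (in the lattice of closed subspaces)
of the chain-equivalence classes of the cells occurring in the collection `Ps`. -/
def lubCandidate (Ps : Set (Set (Submodule ℂ H))) : Set (Submodule ℂ H) :=
  {m : Submodule ℂ H | ∃ u ∈ ⋃₀ Ps,
    m = (sSup {v ∈ ⋃₀ Ps | ChainEquiv (⋃₀ Ps) u v}).topologicalClosure}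


section Helpers

lemma orth_symm' {p q : Submodule ℂ H} (hpq : Orth p q) : Orth q p := by
  intro x hx y hy
  have := hpq y hy x hx
  rw [← inner_conj_symm, this, map_zero]

lemma orth_iff_le' {p q : Submodule ℂ H} : Orth p q ↔ q ≤ pᗮ := by
  constructor
  · intro hpq x hx
    rw [Submodule.mem_orthogonal]
    exact fun y hy => hpq y hy x hx
  · intro hle x hx y hy
    exact (Submodule.mem_orthogonal p y).mp (hle hy) x hx

lemma orth_mono' {p q p' q' : Submodule ℂ H} (hpq : Orth p q) (hp : p' ≤ p) (hq : q' ≤ q) :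
    Orth p' q' := fun x hx y hy => hpq x (hp hx) y (hq hy)

/-- If `p` is orthogonal to every member of `C`, it is orthogonal to the closure of
`sSup C`. -/
lemma orth_closure_sSup' {p : Submodule ℂ H} {C : Set (Submodule ℂ H)}
    (hC : ∀ w ∈ C, Orth p w) : Orth p (sSup C).topologicalClosure := by
  rw [orth_iff_le']
  refine Submodule.topologicalClosure_minimal _ (sSup_le fun w hw => ?_)
    p.isClosed_orthogonal
  exact orth_iff_le'.mp (hC w hw)

def RStep (U : Set (Submodule ℂ H)) (a b : Submodule ℂ H) : Prop :=
  a ∈ U ∧ b ∈ U ∧ ¬ Orth a b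

lemma chainEquiv_iff' {U : Set (Submodule ℂ H)} {u v : Submodule ℂ H} :
    ChainEquiv U u v ↔ u ∈ U ∧ v ∈ U ∧ Relation.ReflTransGen (RStep U) u v := by
  constructor
  · rintro ⟨k, w, h0, hl, hmem, hstep⟩
    refine ⟨h0 ▸ hmem 0, hl ▸ hmem _, ?_⟩
    subst h0 hl
    have key : ∀ n : ℕ, ∀ hn : n < k + 1,
        Relation.ReflTransGen (RStep U) (w 0) (w ⟨n, hn⟩) := by
      intro n
      induction n with
      | zero => intro hn; exact Relation.ReflTransGen.refl
      | succ n ih =>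
        intro hn
        have hn' : n < k + 1 := Nat.lt_of_succ_lt hn
        have hnk : n < k := Nat.lt_of_succ_lt_succ hn
        refine (ih hn').tail ?_
        have e1 : (⟨n, hn'⟩ : Fin (k+1)) = Fin.castSucc ⟨n, hnk⟩ := rfl
        have e2 : (⟨n+1, hn⟩ : Fin (k+1)) = Fin.succ ⟨n, hnk⟩ := rfl
        rw [e1, e2]
        exact ⟨hmem _, hmem _, hstep ⟨n, hnk⟩⟩
    have := key k (Nat.lt_succ_self k)
    simpa [Fin.last] using this
  · rintro ⟨hu, hv, hrel⟩
    clear hv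
    induction hrel with
    | refl => exact ⟨0, fun _ => u, rfl, rfl, fun _ => hu, fun i => i.elim0⟩
    | tail hab hbc ih =>
      obtain ⟨k, w, h0, hl, hmem, hstep⟩ := ih
      rename_i b c
      refine ⟨k + 1, Fin.snoc w c, ?_, ?_, ?_, ?_⟩
      · have : (0 : Fin (k+2)) = Fin.castSucc 0 := rfl
        rw [this, Fin.snoc_castSucc]; exact h0
      · simp [Fin.snoc_last]
      · intro i
        refine Fin.lastCases ?_ ?_ i
        · simp [Fin.snoc_last]; exact hbc.2.1
        · intro j; rw [Fin.snoc_castSucc]; exact hmem j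
      · intro i
        refine Fin.lastCases ?_ ?_ i
        · rw [Fin.succ_last, Fin.snoc_last, Fin.snoc_castSucc, hl]
          exact hbc.2.2
        · intro j
          rw [Fin.succ_castSucc, Fin.snoc_castSucc, Fin.snoc_castSucc]
          exact hstep j

lemma rstep_symm' {U : Set (Submodule ℂ H)} : Symmetric (RStep U) :=
  fun _ _ h => ⟨h.2.1, h.1, fun ho => h.2.2 (orth_symm' ho)⟩

lemma chainEquiv_refl' {U : Set (Submodule ℂ H)} {u : Submodule ℂ H} (hu : u ∈ U) :
    ChainEquiv U u u := chainEquiv_iff'.mpr ⟨hu, hu, Relation.ReflTransGen.refl⟩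

lemma chainEquiv_symm' {U : Set (Submodule ℂ H)} {u v : Submodule ℂ H}
    (h : ChainEquiv U u v) : ChainEquiv U v u := by
  obtain ⟨hu, hv, hr⟩ := chainEquiv_iff'.mp h
  exact chainEquiv_iff'.mpr ⟨hv, hu, (@Relation.ReflTransGen.symmetric _ _ ⟨fun _ _ => @rstep_symm' _ _ _ U _ _⟩).symm _ _ hr⟩

lemma chainEquiv_trans' {U : Set (Submodule ℂ H)} {u v z : Submodule ℂ H}
    (h1 : ChainEquiv U u v) (h2 : ChainEquiv U v z) : ChainEquiv U u z := by
  obtain ⟨hu, hv, hr1⟩ := chainEquiv_iff'.mp h1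
  obtain ⟨_, hz, hr2⟩ := chainEquiv_iff'.mp h2
  exact chainEquiv_iff'.mpr ⟨hu, hz, hr1.trans hr2⟩

lemma chain_class_eq' {U : Set (Submodule ℂ H)} {u v : Submodule ℂ H}
    (h : ChainEquiv U u v) :
    {w ∈ U | ChainEquiv U u w} = {w ∈ U | ChainEquiv U v w} := by
  ext w
  exact ⟨fun ⟨hw, hc⟩ => ⟨hw, chainEquiv_trans' (chainEquiv_symm' h) hc⟩,
    fun ⟨hw, hc⟩ => ⟨hw, chainEquiv_trans' h hc⟩⟩

end Helpers

/-- Let `H` be a complex Hilbert space and `Ps` a nonempty collection of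
partitions of `H`.  The set `Q₀` of suprema of the chain-equivalence classes of `⋃ Ps` is a
partition of `H`, and `Q₀` is the least upper bound of `Ps` in the refinement order. -/
theorem lubCandidate_isPartition_isLUB [CompleteSpace H]
    (Ps : Set (Set (Submodule ℂ H))) (hne : Ps.Nonempty) (h : ∀ P ∈ Ps, IsPartition P) :
    IsPartition (lubCandidate Ps) ∧
      (∀ P ∈ Ps, Refines P (lubCandidate Ps)) ∧
      ∀ Q' : Set (Submodule ℂ H), IsPartition Q' → (∀ P ∈ Ps, Refines P Q') →
        Refines (lubCandidate Ps) Q' := by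
    classical
  have hUmem : ∀ u ∈ ⋃₀ Ps, ∃ P ∈ Ps, u ∈ P := fun u hu => hu
  have hclassmem : ∀ u ∈ ⋃₀ Ps,
      u ∈ {v ∈ ⋃₀ Ps | ChainEquiv (⋃₀ Ps) u v} :=
    fun u hu => ⟨hu, chainEquiv_refl' hu⟩
  have hle_cell : ∀ u ∈ ⋃₀ Ps,
      u ≤ (sSup {v ∈ ⋃₀ Ps | ChainEquiv (⋃₀ Ps) u v}).topologicalClosure :=
    fun u hu => le_trans (le_sSup (hclassmem u hu)) (Submodule.le_topologicalClosure _)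
  have hrefines : ∀ P ∈ Ps, Refines P (lubCandidate Ps) := by
    intro P hP p hp
    exact ⟨_, ⟨p, ⟨P, hP, hp⟩, rfl⟩, hle_cell p ⟨P, hP, hp⟩⟩
  refine ⟨⟨?_, ?_, ?_, ?_⟩, hrefines, ?_⟩
  · -- cells are nonzero
    rintro m ⟨u, hu, rfl⟩
    obtain ⟨P, hP, huP⟩ := hUmem u hu
    intro hbot
    exact (h P hP).1 u huP (le_bot_iff.mp (hbot ▸ hle_cell u hu))
  · -- cells are closed
    rintro m ⟨u, hu, rfl⟩
    exact Submodule.isClosed_topologicalClosure _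
  · -- cells are pairwise orthogonal
    rintro m₁ ⟨u, hu, rfl⟩ m₂ ⟨v, hv, rfl⟩ hne'
    have key : ∀ w ∈ {w ∈ ⋃₀ Ps | ChainEquiv (⋃₀ Ps) u w},
        ∀ w' ∈ {w ∈ ⋃₀ Ps | ChainEquiv (⋃₀ Ps) v w}, Orth w w' := by
      rintro w ⟨hwU, hcw⟩ w' ⟨hw'U, hcw'⟩
      by_contra hno
      have hww' : ChainEquiv (⋃₀ Ps) w w' :=
        chainEquiv_iff'.mpr ⟨hwU, hw'U, Relation.ReflTransGen.single ⟨hwU, hw'U, hno⟩⟩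
      have huv : ChainEquiv (⋃₀ Ps) u v :=
        chainEquiv_trans' hcw (chainEquiv_trans' hww' (chainEquiv_symm' hcw'))
      exact hne' (by rw [chain_class_eq' huv])
    have step1 : ∀ w ∈ {w ∈ ⋃₀ Ps | ChainEquiv (⋃₀ Ps) u w},
        Orth (sSup {w ∈ ⋃₀ Ps | ChainEquiv (⋃₀ Ps) v w}).topologicalClosure w :=
      fun w hw => orth_symm' (orth_closure_sSup' (key w hw))
    exact orth_symm' (orth_closure_sSup' step1)
  · -- the supremum is all of H
    obtain ⟨P, hP⟩ := hne
    rw [eq_top_iff, ← (h P hP).2.2.2]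
    apply Submodule.topologicalClosure_mono
    refine sSup_le fun p hp => ?_
    exact le_trans (hle_cell p ⟨P, hP, hp⟩) (le_sSup ⟨p, ⟨P, hP, hp⟩, rfl⟩)
  · -- least upper bound
    intro Q' hQ' href
    rintro m ⟨u, hu, rfl⟩
    obtain ⟨P₀, hP₀, huP⟩ := hUmem u hu
    obtain ⟨q', hq', huq⟩ := href P₀ hP₀ u huP
    have claim : ∀ v ∈ {w ∈ ⋃₀ Ps | ChainEquiv (⋃₀ Ps) u w}, v ≤ q' := by
      rintro v ⟨hvU, hcv⟩
      obtain ⟨-, -, hrel⟩ := chainEquiv_iff'.mp hcv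
      clear hvU hcv
      induction hrel with
      | refl => exact huq
      | tail hab hbc ih =>
        rename_i b c
        obtain ⟨P', hP', hcP⟩ := hUmem c hbc.2.1
        obtain ⟨q'', hq'', hcq⟩ := href P' hP' c hcP
        by_cases heq : q' = q''
        · exact heq ▸ hcq
        · exact absurd (orth_mono' (hQ'.2.2.1 q' hq' q'' hq'' heq) ih hcq) hbc.2.2
    exact ⟨q', hq',
      Submodule.topologicalClosure_minimal _ (sSup_le claim) (hQ'.2.1 q' hq')⟩
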